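/- Let (t, n, b) be a pointwise right-handed orthonormal frame of smooth vector fields on an open set of ℝ³, and define the helicities H_t = t·(∇×t), H_n = n·(∇×n), H_b = b·(∇×b) and cross-helicities H_bn = b·(∇×n), H_tn = t·(∇×n), H_bt = b·(∇×t), H_t etc. Then (n·∇)t = H_bn · n + ½(H_t − H_n + H_b) · b. -/

import Mathlib

open Matrix

noncomputable def pd (i : Fin 3) (f : (Fin 3 → ℝ) → ℝ) (x : Fin 3 → ℝ) : ℝ :=
  fderiv ℝ f x (Pi.single i 1)

noncomputable def grad3 (f : (Fin 3 → ℝ) → ℝ) (x : Fin 3 → ℝ) : Fin 3 → ℝ :=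
  fun i => pd i f x

noncomputable def curl3 (v : (Fin 3 → ℝ) → Fin 3 → ℝ) (x : Fin 3 → ℝ) : Fin 3 → ℝ :=
  ![pd 1 (fun y => v y 2) x - pd 2 (fun y => v y 1) x,
    pd 2 (fun y => v y 0) x - pd 0 (fun y => v y 2) x,
    pd 0 (fun y => v y 1) x - pd 1 (fun y => v y 0) x]

noncomputable def div3 (v : (Fin 3 → ℝ) → Fin 3 → ℝ) (x : Fin 3 → ℝ) : ℝ :=
  pd 0 (fun y => v y 0) x + pd 1 (fun y => v y 1) x + pd 2 (fun y => v y 2) x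

noncomputable def dirDeriv (u v : (Fin 3 → ℝ) → Fin 3 → ℝ) (x : Fin 3 → ℝ) : Fin 3 → ℝ :=
  fun i => u x ⬝ᵥ grad3 (fun y => v y i) x

noncomputable def norm3 (v : Fin 3 → ℝ) : ℝ := Real.sqrt (v ⬝ᵥ v)

/-- `(t,n,b)` is a pointwise right-handed orthonormal frame on `U`. -/
def IsRHFrameOn (t n b : (Fin 3 → ℝ) → Fin 3 → ℝ) (U : Set (Fin 3 → ℝ)) : Prop :=
  ∀ x ∈ U, t x ⬝ᵥ t x = 1 ∧ n x ⬝ᵥ n x = 1 ∧ b x ⬝ᵥ b x = 1 ∧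
    t x ⬝ᵥ n x = 0 ∧ t x ⬝ᵥ b x = 0 ∧ n x ⬝ᵥ b x = 0 ∧
    t x = n x ⨯₃ b x ∧ n x = b x ⨯₃ t x ∧ b x = t x ⨯₃ n x

/-- Epsilon-contraction identity: `(a × c) · curl v = c · (∇_a v) - a · (∇_c v)`. -/
lemma cross_dot_curl (a c : Fin 3 → ℝ) (v : (Fin 3 → ℝ) → Fin 3 → ℝ) (x : Fin 3 → ℝ) :
    (a ⨯₃ c) ⬝ᵥ curl3 v x
      = c ⬝ᵥ (fun i => a ⬝ᵥ grad3 (fun y => v y i) x)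
        - a ⬝ᵥ (fun i => c ⬝ᵥ grad3 (fun y => v y i) x) := by
  simp [curl3, grad3, cross_apply, dotProduct, Fin.sum_univ_three]
  ring

/-- Dotting a vector with a gradient is the Fréchet derivative applied to the vector. -/
lemma dot_grad (a : Fin 3 → ℝ) (f : (Fin 3 → ℝ) → ℝ) (x : Fin 3 → ℝ) :
    a ⬝ᵥ grad3 f x = fderiv ℝ f x a := by
  have hsingle : ∀ i : Fin 3, (fun j => if i = j then (1:ℝ) else 0) = Pi.single i 1 := by
    intro i; funext j; simp [Pi.single_apply, eq_comm]
  conv_rhs => rw [pi_eq_sum_univ a]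
  rw [map_sum]
  simp [grad3, pd, dotProduct, Fin.sum_univ_three, hsingle]

/-- If `u ⬝ᵥ v` is locally constant, the derivatives along any direction satisfy
    the product-rule orthogonality relation. -/
lemma orth_deriv (u v : (Fin 3 → ℝ) → Fin 3 → ℝ) (x : Fin 3 → ℝ)
    (hu : DifferentiableAt ℝ u x) (hv : DifferentiableAt ℝ v x) (c : ℝ)
    (h : ∀ᶠ y in nhds x, u y ⬝ᵥ v y = c) (a : Fin 3 → ℝ) :
    u x ⬝ᵥ (fun i => a ⬝ᵥ grad3 (fun y => v y i) x)
      + v x ⬝ᵥ (fun i => a ⬝ᵥ grad3 (fun y => u y i) x) = 0 := by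
  have hui : ∀ i, DifferentiableAt ℝ (fun y => u y i) x := differentiableAt_pi.mp hu
  have hvi : ∀ i, DifferentiableAt ℝ (fun y => v y i) x := differentiableAt_pi.mp hv
  set L := ((u x 0 • fderiv ℝ (fun y => v y 0) x + v x 0 • fderiv ℝ (fun y => u y 0) x)
        + (u x 1 • fderiv ℝ (fun y => v y 1) x + v x 1 • fderiv ℝ (fun y => u y 1) x))
        + (u x 2 • fderiv ℝ (fun y => v y 2) x + v x 2 • fderiv ℝ (fun y => u y 2) x)
    with hL
  have hg : HasFDerivAt (fun y => u y ⬝ᵥ v y) L x := by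
    have heq : (fun y => u y ⬝ᵥ v y)
        = fun y => u y 0 * v y 0 + u y 1 * v y 1 + u y 2 * v y 2 := by
      funext y; simp [dotProduct, Fin.sum_univ_three]
    rw [heq, hL]
    exact (((hui 0).hasFDerivAt.mul (hvi 0).hasFDerivAt).add
      ((hui 1).hasFDerivAt.mul (hvi 1).hasFDerivAt)).add
      ((hui 2).hasFDerivAt.mul (hvi 2).hasFDerivAt)
  have hzero : L = 0 := by
    rw [← hg.fderiv]
    have : fderiv ℝ (fun y => u y ⬝ᵥ v y) x = fderiv ℝ (fun _ => c) x :=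
      Filter.EventuallyEq.fderiv_eq h
    rw [this, fderiv_fun_const]
    rfl
  have hza := DFunLike.congr_fun hzero a
  simp only [hL, ContinuousLinearMap.add_apply, ContinuousLinearMap.smul_apply,
    ContinuousLinearMap.zero_apply, smul_eq_mul] at hza
  simp only [dot_grad]
  simp only [dotProduct, Fin.sum_univ_three]
  linarith

/-- An orthonormal triple in `ℝ³` is a basis: every vector decomposes. -/
lemma frame_decomp (T N B : Fin 3 → ℝ)
    (hTT : T ⬝ᵥ T = 1) (hNN : N ⬝ᵥ N = 1) (hBB : B ⬝ᵥ B = 1)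
    (hTN : T ⬝ᵥ N = 0) (hTB : T ⬝ᵥ B = 0) (hNB : N ⬝ᵥ B = 0)
    (v : Fin 3 → ℝ) :
    v = (T ⬝ᵥ v) • T + (N ⬝ᵥ v) • N + (B ⬝ᵥ v) • B := by
  set M : Matrix (Fin 3) (Fin 3) ℝ := Matrix.of ![T, N, B] with hM
  have h1 : M * Mᵀ = 1 := by
    simp only [dotProduct, Fin.sum_univ_three] at hTT hNN hBB hTN hTB hNB
    ext i j
    fin_cases i <;> fin_cases j <;>
      simp [hM, Matrix.mul_apply, Matrix.transpose_apply, Fin.sum_univ_three,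
        Matrix.one_apply, Matrix.vecHead, Matrix.vecTail] <;> linarith
  have h2 : Mᵀ * M = 1 := mul_eq_one_comm.mp h1
  have h3 : Mᵀ *ᵥ (M *ᵥ v) = v := by rw [Matrix.mulVec_mulVec, h2, Matrix.one_mulVec]
  funext k
  have hk := congrFun h3 k
  simp only [Matrix.mulVec, Matrix.transpose_apply, dotProduct, Fin.sum_univ_three, hM,
    Matrix.of_apply, Matrix.cons_val_zero, Matrix.cons_val_one, Matrix.head_cons,
    Matrix.cons_val_two, Matrix.tail_cons, Matrix.vecHead, Matrix.vecTail, Function.comp,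
    Fin.succ_zero_eq_one] at hk
  simp only [Pi.add_apply, Pi.smul_apply, smul_eq_mul, dotProduct, Fin.sum_univ_three]
  linarith [hk]

/-- (n·∇)t = H_bn n + ½(H_t − H_n + H_b) b, where H_t = t·(∇×t), H_n = n·(∇×n),
    H_b = b·(∇×b) and H_bn = b·(∇×n). -/
theorem dirDeriv_tangent_along_normal (U : Set (Fin 3 → ℝ)) (hU : IsOpen U)
    (t n b : (Fin 3 → ℝ) → Fin 3 → ℝ)
    (ht : ContDiffOn ℝ 2 t U) (hn : ContDiffOn ℝ 2 n U) (hb : ContDiffOn ℝ 2 b U)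
    (hframe : IsRHFrameOn t n b U) (x : Fin 3 → ℝ) (hx : x ∈ U) :
    dirDeriv n t x = (b x ⬝ᵥ curl3 n x) • n x
      + ((1 / 2) * (t x ⬝ᵥ curl3 t x - n x ⬝ᵥ curl3 n x + b x ⬝ᵥ curl3 b x)) • b x := by
  obtain ⟨htt, hnn, hbb, htn, htb, hnb, htc, hnc, hbc⟩ := hframe x hx
  have hmem : U ∈ nhds x := hU.mem_nhds hx
  have hdt : DifferentiableAt ℝ t x := (ht.contDiffAt hmem).differentiableAt two_ne_zero
  have hdn : DifferentiableAt ℝ n x := (hn.contDiffAt hmem).differentiableAt two_ne_zero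
  have hdb : DifferentiableAt ℝ b x := (hb.contDiffAt hmem).differentiableAt two_ne_zero
  -- eventual orthonormality
  have htt_ev : ∀ᶠ y in nhds x, t y ⬝ᵥ t y = 1 := by
    filter_upwards [hmem] with y hy using (hframe y hy).1
  have hnn_ev : ∀ᶠ y in nhds x, n y ⬝ᵥ n y = 1 := by
    filter_upwards [hmem] with y hy using (hframe y hy).2.1
  have htn_ev : ∀ᶠ y in nhds x, t y ⬝ᵥ n y = 0 := by
    filter_upwards [hmem] with y hy using (hframe y hy).2.2.2.1
  have htb_ev : ∀ᶠ y in nhds x, t y ⬝ᵥ b y = 0 := by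
    filter_upwards [hmem] with y hy using (hframe y hy).2.2.2.2.1
  have hnb_ev : ∀ᶠ y in nhds x, n y ⬝ᵥ b y = 0 := by
    filter_upwards [hmem] with y hy using (hframe y hy).2.2.2.2.2.1
  -- orthogonality derivative relations
  have A1 := orth_deriv t t x hdt hdt 1 htt_ev (n x)
  have A2 := orth_deriv n n x hdn hdn 1 hnn_ev (t x)
  have A3 := orth_deriv t n x hdt hdn 0 htn_ev (n x)
  have A4 := orth_deriv t n x hdt hdn 0 htn_ev (b x)
  have A5 := orth_deriv n b x hdn hdb 0 hnb_ev (t x)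
  have A6 := orth_deriv t b x hdt hdb 0 htb_ev (n x)
  -- curl expansions via the cross-product structure of the frame
  have C1 : b x ⬝ᵥ curl3 n x
      = n x ⬝ᵥ (fun i => t x ⬝ᵥ grad3 (fun y => n y i) x)
        - t x ⬝ᵥ (fun i => n x ⬝ᵥ grad3 (fun y => n y i) x) := by
    rw [hbc]; exact cross_dot_curl (t x) (n x) n x
  have C2 : t x ⬝ᵥ curl3 t x
      = b x ⬝ᵥ (fun i => n x ⬝ᵥ grad3 (fun y => t y i) x)
        - n x ⬝ᵥ (fun i => b x ⬝ᵥ grad3 (fun y => t y i) x) := by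
    rw [htc]; exact cross_dot_curl (n x) (b x) t x
  have C3 : n x ⬝ᵥ curl3 n x
      = t x ⬝ᵥ (fun i => b x ⬝ᵥ grad3 (fun y => n y i) x)
        - b x ⬝ᵥ (fun i => t x ⬝ᵥ grad3 (fun y => n y i) x) := by
    rw [hnc]; exact cross_dot_curl (b x) (t x) n x
  have C4 : b x ⬝ᵥ curl3 b x
      = n x ⬝ᵥ (fun i => t x ⬝ᵥ grad3 (fun y => b y i) x)
        - t x ⬝ᵥ (fun i => n x ⬝ᵥ grad3 (fun y => b y i) x) := by
    rw [hbc]; exact cross_dot_curl (t x) (n x) b x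
  -- components of (n·∇)t
  have e1 : t x ⬝ᵥ dirDeriv n t x = 0 := by
    unfold dirDeriv; linarith
  have e2 : n x ⬝ᵥ dirDeriv n t x = b x ⬝ᵥ curl3 n x := by
    unfold dirDeriv; rw [C1]; linarith
  have e3 : b x ⬝ᵥ dirDeriv n t x
      = (1 / 2) * (t x ⬝ᵥ curl3 t x - n x ⬝ᵥ curl3 n x + b x ⬝ᵥ curl3 b x) := by
    unfold dirDeriv; rw [C2, C3, C4]; linarith
  calc dirDeriv n t x
      = (t x ⬝ᵥ dirDeriv n t x) • t x + (n x ⬝ᵥ dirDeriv n t x) • n x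
          + (b x ⬝ᵥ dirDeriv n t x) • b x :=
        frame_decomp (t x) (n x) (b x) htt hnn hbb htn htb hnb (dirDeriv n t x)
    _ = (b x ⬝ᵥ curl3 n x) • n x
          + ((1 / 2) * (t x ⬝ᵥ curl3 t x - n x ⬝ᵥ curl3 n x + b x ⬝ᵥ curl3 b x)) • b x := by
        rw [e1, e2, e3, zero_smul, zero_add]
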